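/- Let X be a connected, locally finite graph and let N be a group acting on X by graph automorphisms with uniformly bounded orbits: there exists R ≥ 0 such that for every vertex v, the orbit N·v has diameter at most R in the path metric of X. Then the quotient map π : X → X/N to the quotient graph is a quasi-isometry, where X/N carries its path metric. -/

import Mathlib

/-- The quotient graph of a graph by a group action on the vertices: vertices are
the orbits, and two distinct orbits are adjacent when they contain adjacent
representatives. -/
def quotientGraph {V : Type*} (G : SimpleGraph V) (N : Type*) [Group N] [MulAction N V] :
    SimpleGraph (Quotient (MulAction.orbitRel N V)) where
  Adj x y := x ≠ y ∧ ∃ u v : V, Quotient.mk (MulAction.orbitRel N V) u = x ∧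
    Quotient.mk (MulAction.orbitRel N V) v = y ∧ G.Adj u v
  symm := by
    constructor
    rintro x y ⟨hne, u, v, hu, hv, h⟩
    exact ⟨hne.symm, v, u, hv, hu, h.symm⟩
  loopless := by
    constructor
    rintro x ⟨hne, -⟩
    exact hne rfl

section Aux

variable {V : Type*} {G : SimpleGraph V} {N : Type*} [Group N] [MulAction N V]

private lemma quot_dist_le_one {u v : V} (h : G.Adj u v) :
    (quotientGraph G N).dist (Quotient.mk (MulAction.orbitRel N V) u)
      (Quotient.mk (MulAction.orbitRel N V) v) ≤ 1 := by
  by_cases heq : (Quotient.mk (MulAction.orbitRel N V) u : Quotient (MulAction.orbitRel N V))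
      = Quotient.mk (MulAction.orbitRel N V) v
  · rw [heq, SimpleGraph.dist_self]; omega
  · have hadj : (quotientGraph G N).Adj (Quotient.mk (MulAction.orbitRel N V) u)
        (Quotient.mk (MulAction.orbitRel N V) v) := ⟨heq, u, v, rfl, rfl, h⟩
    exact SimpleGraph.dist_le (hadj.toWalk)

private lemma quot_reach {u v : V} (p : G.Walk u v) :
    (quotientGraph G N).Reachable (Quotient.mk (MulAction.orbitRel N V) u)
      (Quotient.mk (MulAction.orbitRel N V) v) := by
  induction p with
  | nil => rfl
  | @cons a b c h p ih =>
    refine SimpleGraph.Reachable.trans ?_ ih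
    by_cases heq : (Quotient.mk (MulAction.orbitRel N V) a : Quotient (MulAction.orbitRel N V))
        = Quotient.mk (MulAction.orbitRel N V) b
    · rw [heq]
    · exact SimpleGraph.Adj.reachable ⟨heq, a, b, rfl, rfl, h⟩

private lemma quot_connected (hconn : G.Connected) :
    (quotientGraph G N).Connected := by
  have hne : Nonempty V := hconn.nonempty
  have : Nonempty (Quotient (MulAction.orbitRel N V)) := Nonempty.map (Quotient.mk _) hne
  refine ⟨fun x y => ?_⟩
  induction x using Quotient.inductionOn with | _ u =>
  induction y using Quotient.inductionOn with | _ v =>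
  obtain ⟨p⟩ := hconn u v
  exact quot_reach p

private lemma quot_dist_le (hconn : G.Connected) {u v : V} (p : G.Walk u v) :
    (quotientGraph G N).dist (Quotient.mk (MulAction.orbitRel N V) u)
      (Quotient.mk (MulAction.orbitRel N V) v) ≤ p.length := by
  induction p with
  | nil => simp [SimpleGraph.dist_self]
  | cons h p ih =>
    calc (quotientGraph G N).dist _ _ ≤ _ + _ := (quot_connected hconn).dist_triangle
    _ ≤ 1 + p.length := Nat.add_le_add (quot_dist_le_one h) ih
    _ = (SimpleGraph.Walk.cons h p).length := by simp [Nat.add_comm]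

end Aux

/-- if a group `N` acts by automorphisms on a connected locally finite
graph with uniformly bounded orbits, then the quotient map to the quotient graph is
a quasi-isometry (with respect to the path metrics). -/
theorem stmt_4 {V : Type*} (G : SimpleGraph V) (hconn : G.Connected)
    (hlf : G.LocallyFinite)
    (N : Type*) [Group N] [MulAction N V]
    (hact : ∀ (g : N) (u v : V), G.Adj u v → G.Adj (g • u) (g • v))
    (R : ℕ) (horb : ∀ (v : V) (g h : N), G.dist (g • v) (h • v) ≤ R) :
    ∃ l e : ℝ, 1 ≤ l ∧ 0 ≤ e ∧
      (∀ u v : V,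
        (1 / l) * (G.dist u v : ℝ) - e ≤
          ((quotientGraph G N).dist (Quotient.mk (MulAction.orbitRel N V) u)
            (Quotient.mk (MulAction.orbitRel N V) v) : ℝ) ∧
        ((quotientGraph G N).dist (Quotient.mk (MulAction.orbitRel N V) u)
            (Quotient.mk (MulAction.orbitRel N V) v) : ℝ) ≤
          l * (G.dist u v : ℝ) + e) ∧
      (∀ x : Quotient (MulAction.orbitRel N V), ∃ u : V,
        ((quotientGraph G N).dist x (Quotient.mk (MulAction.orbitRel N V) u) : ℝ) ≤ e) := by
  have hQconn : (quotientGraph G N).Connected := quot_connected hconn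
  -- distance in same orbit is ≤ R
  have hsame : ∀ u v : V, (Quotient.mk (MulAction.orbitRel N V) u =
      Quotient.mk (MulAction.orbitRel N V) v) → G.dist u v ≤ R := by
    intro u v h
    obtain ⟨g, hg⟩ := Quotient.exact h
    have := horb v g 1
    simpa [hg] using this
  -- lower bound: G.dist u v ≤ (R+1) * quotdist + R
  have key : ∀ (x y : Quotient (MulAction.orbitRel N V)) (q : (quotientGraph G N).Walk x y)
      (u v : V), Quotient.mk (MulAction.orbitRel N V) u = x →
      Quotient.mk (MulAction.orbitRel N V) v = y →
      G.dist u v ≤ (R + 1) * q.length + R := by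
    intro x y q
    induction q with
    | nil =>
      intro u v hu hv
      simpa using hsame u v (hu.trans hv.symm)
    | @cons x z y h q ih =>
      intro u v hu hv
      simp only [SimpleGraph.Walk.length_cons]
      obtain ⟨hne, a, b, ha, hb, hab⟩ := h
      have h1 : G.dist u a ≤ R := hsame u a (by rw [hu, ha])
      have h2 : G.dist b v ≤ (R + 1) * q.length + R := ih b v hb hv
      have h3 : G.dist a b ≤ 1 := SimpleGraph.dist_le hab.toWalk
      calc G.dist u v ≤ G.dist u a + G.dist a v := hconn.dist_triangle
        _ ≤ G.dist u a + (G.dist a b + G.dist b v) :=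
          Nat.add_le_add_left hconn.dist_triangle _
        _ ≤ R + (1 + ((R + 1) * q.length + R)) := by
          exact Nat.add_le_add h1 (Nat.add_le_add h3 h2)
        _ = (R + 1) * (q.length + 1) + R := by ring
  refine ⟨(R : ℝ) + 1, (R : ℝ), by push_cast; linarith [Nat.cast_nonneg (α := ℝ) R],
    Nat.cast_nonneg R, ?_, ?_⟩
  · intro u v
    set d := (quotientGraph G N).dist (Quotient.mk (MulAction.orbitRel N V) u)
      (Quotient.mk (MulAction.orbitRel N V) v) with hd
    constructor
    · obtain ⟨q, hq⟩ := hQconn.exists_walk_length_eq_dist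
        (Quotient.mk (MulAction.orbitRel N V) u) (Quotient.mk (MulAction.orbitRel N V) v)
      have := key _ _ q u v rfl rfl
      rw [hq, ← hd] at this
      have hcast : (G.dist u v : ℝ) ≤ (R + 1) * (d : ℝ) + R := by exact_mod_cast this
      have hRpos : (0:ℝ) < (R : ℝ) + 1 := by positivity
      rw [div_mul_eq_mul_div, sub_le_iff_le_add, div_le_iff₀ hRpos]
      have hdnn : (0:ℝ) ≤ (d : ℝ) := Nat.cast_nonneg d
      have hRnn : (0:ℝ) ≤ (R : ℝ) := Nat.cast_nonneg R
      nlinarith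
    · obtain ⟨p, hp⟩ := hconn.exists_walk_length_eq_dist u v
      have := quot_dist_le (N := N) hconn p
      rw [hp, ← hd] at this
      have hcast : (d : ℝ) ≤ (G.dist u v : ℝ) := by exact_mod_cast this
      have hGnn : (0:ℝ) ≤ (G.dist u v : ℝ) := Nat.cast_nonneg _
      have hRnn : (0:ℝ) ≤ (R : ℝ) := Nat.cast_nonneg R
      nlinarith
  · intro x
    refine ⟨x.out, ?_⟩
    have : (Quotient.mk (MulAction.orbitRel N V) x.out : Quotient (MulAction.orbitRel N V))
        = x := Quotient.out_eq x
    rw [this, SimpleGraph.dist_self]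
    simp
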